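/- Let ℓ ≥ 1 be an integer, a = 2π/(2ℓ+1), ρ = exp(2πi/(2ℓ+1)). Let g be a real 3×3 special orthogonal matrix (g ∈ SO(3)), set α = (0,1,-i) ∈ ℂ³ and β = (1,0,0) ∈ ℂ³, and let j be an integer with -ℓ ≤ j ≤ ℓ such that (gβ)·N_j ≠ 0. Then for every X ∈ ℝ³: ((gX)·N_j)^ℓ = Σ_{k=-ℓ}^{ℓ} G_j^k · (X·N_k)^ℓ, where G_j^k = (1/(2ℓ+1))·Σ_{n=-ℓ}^{ℓ} ρ^{-k n} · ((gα)·N_j)^n · ((gβ)·N_j)^{ℓ-n}, the powers with possibly negative integer exponent being taken in ℂ (zpow; both bases are nonzero under the hypothesis). -/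

import Mathlib

open Real

/-- The null vector `N(α) = (1, i sin α, i cos α) ∈ ℂ³`. -/
noncomputable def Nvec (α : ℝ) : Fin 3 → ℂ :=
  ![1, Complex.I * Real.sin α, Complex.I * Real.cos α]

/-- The bilinear (non-Hermitian) pairing on `ℂ³`. -/
noncomputable def dotC (W Z : Fin 3 → ℂ) : ℂ :=
  ∑ i, W i * Z i

section Aux

open Polynomial Finset Matrix

lemma aux_sum_Icc' (ℓ : ℕ) (f : ℤ → ℂ) :
    ∑ k ∈ Finset.Icc (-(ℓ:ℤ)) ℓ, f k = ∑ m ∈ Finset.range (2*ℓ+1), f ((m:ℤ) - ℓ) := by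
  refine Finset.sum_nbij' (i := fun k => (k + ℓ).toNat) (j := fun m => (m:ℤ) - ℓ)
      ?_ ?_ ?_ ?_ ?_ <;> intro a ha <;> simp at ha ⊢ <;>
    first | omega | (congr 1; omega)

lemma aux_geom' (L : ℕ) (x : ℂ) (hx1 : x ≠ 1) (hxL : x ^ L = 1) :
    ∑ m ∈ Finset.range L, x ^ m = 0 := by
  rw [geom_sum_eq hx1, hxL]; simp

lemma aux_rho_zpow (ℓ : ℕ) (d : ℤ) :
    Complex.exp (2*π*Complex.I/(2*ℓ+1)) ^ d = Complex.exp (d * (2*π*Complex.I/(2*ℓ+1))) :=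
  (Complex.exp_int_mul _ d).symm

lemma aux_L_ne (ℓ : ℕ) : (2*(ℓ:ℂ)+1) ≠ 0 := by
  have : ((2*ℓ+1 : ℕ) : ℂ) ≠ 0 := Nat.cast_ne_zero.mpr (by omega)
  push_cast at this; exact this

lemma aux_rho_pow_L (ℓ : ℕ) : Complex.exp (2*π*Complex.I/(2*ℓ+1)) ^ (2*ℓ+1 : ℕ) = 1 := by
  rw [← Complex.exp_nat_mul]
  have h : ((2*ℓ+1 : ℕ):ℂ) * (2*π*Complex.I/(2*ℓ+1)) = 2*π*Complex.I := by
    have := aux_L_ne ℓ; field_simp; simp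
  rw [h]
  simpa [mul_comm, mul_assoc] using Complex.exp_two_pi_mul_I

lemma aux_rho_ne_one (ℓ : ℕ) (d : ℤ) (hd : d ≠ 0) (hd2 : d.natAbs ≤ 2*ℓ) :
    Complex.exp (2*π*Complex.I/(2*ℓ+1)) ^ d ≠ 1 := by
  rw [aux_rho_zpow]
  intro h
  rw [Complex.exp_eq_one_iff] at h
  obtain ⟨m, hm⟩ := h
  have h2 : (2*(π:ℂ)*Complex.I) ≠ 0 := by
    simp [Real.pi_ne_zero, Complex.I_ne_zero, Complex.ofReal_ne_zero]
  have hL := aux_L_ne ℓ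
  have hdm : (d : ℂ) = m * (2*ℓ+1) := by
    field_simp at hm
    have h3 : (d:ℂ) * (2*π*Complex.I) = (m * (2*ℓ+1)) * (2*π*Complex.I) := by
      linear_combination (2*(π:ℂ)*Complex.I) * hm
    exact mul_right_cancel₀ h2 h3
  have hdm' : d = m * (2*ℓ+1) := by exact_mod_cast hdm
  have hm0 : m ≠ 0 := by rintro rfl; simp at hdm'; omega
  have h4 : d.natAbs = m.natAbs * (2*ℓ+1) := by
    rw [hdm', Int.natAbs_mul]
    congr 1
  have h5 : 1 ≤ m.natAbs := Int.natAbs_pos.mpr hm0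
  have h6 : 2*ℓ+1 ≤ m.natAbs * (2*ℓ+1) := Nat.le_mul_of_pos_left _ h5
  omega

lemma aux_dft (ℓ : ℕ) (n' m : ℕ) (hn : n' < 2*ℓ+1) (hm : m < 2*ℓ+1) :
    ∑ k ∈ Finset.Icc (-(ℓ:ℤ)) ℓ, Complex.exp (2*π*Complex.I/(2*ℓ+1)) ^ (k * ((m:ℤ) - n'))
      = if n' = m then ((2*ℓ+1 : ℕ) : ℂ) else 0 := by
  set ρ := Complex.exp (2*π*Complex.I/(2*ℓ+1)) with hρdef
  have hρ : ρ ≠ 0 := Complex.exp_ne_zero _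
  by_cases h : n' = m
  · subst h
    simp only [sub_self, mul_zero, zpow_zero, Finset.sum_const, nsmul_eq_mul, mul_one, if_pos rfl]
    rw [Int.card_Icc]
    congr 1
    omega
  · rw [if_neg h]
    set d : ℤ := (m:ℤ) - n' with hd
    have hd0 : d ≠ 0 := by omega
    have hdabs : d.natAbs ≤ 2*ℓ := by omega
    have hx1 : ρ ^ d ≠ 1 := aux_rho_ne_one ℓ d hd0 hdabs
    have hxL : (ρ ^ d) ^ (2*ℓ+1 : ℕ) = 1 := by
      rw [← zpow_natCast (ρ^d), ← _root_.zpow_mul, mul_comm, _root_.zpow_mul, zpow_natCast, aux_rho_pow_L,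
        _root_.one_zpow]
    have hx0 : ρ ^ d ≠ 0 := zpow_ne_zero _ hρ
    calc ∑ k ∈ Finset.Icc (-(ℓ:ℤ)) ℓ, ρ ^ (k * d)
        = ∑ k ∈ Finset.Icc (-(ℓ:ℤ)) ℓ, (ρ ^ d) ^ k := by
          refine Finset.sum_congr rfl fun k hk => ?_
          rw [← _root_.zpow_mul, mul_comm]
      _ = ∑ m' ∈ Finset.range (2*ℓ+1), (ρ ^ d) ^ ((m':ℤ) - ℓ) := aux_sum_Icc' ℓ _
      _ = (∑ m' ∈ Finset.range (2*ℓ+1), (ρ ^ d) ^ m') / (ρ^d)^(ℓ:ℕ) := by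
          rw [Finset.sum_div]
          exact Finset.sum_congr rfl fun m' _ => by
            rw [zpow_sub₀ hx0, zpow_natCast, zpow_natCast]
      _ = 0 := by rw [aux_geom' _ _ hx1 hxL, zero_div]

noncomputable def auxPoly (Y : Fin 3 → ℂ) : Polynomial ℂ :=
  C ((-Y 1 + Complex.I * Y 2)/2) + C (Y 0) * X + C ((Y 1 + Complex.I * Y 2)/2) * X^2

lemma auxPoly_natDegree (Y : Fin 3 → ℂ) : (auxPoly Y).natDegree ≤ 2 := by
  unfold auxPoly; compute_degree

lemma aux_laurent (ℓ : ℕ) (Y : Fin 3 → ℂ) (w : ℂ) (hw : w ≠ 0) :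
    (Y 0 + w * ((Y 1 + Complex.I * Y 2)/2) + w⁻¹ * ((-Y 1 + Complex.I * Y 2)/2)) ^ ℓ
      = ∑ m ∈ Finset.range (2*ℓ+1), ((auxPoly Y)^ℓ).coeff m * w ^ ((m:ℤ) - ℓ) := by
  have h1 : Y 0 + w * ((Y 1 + Complex.I * Y 2)/2) + w⁻¹ * ((-Y 1 + Complex.I * Y 2)/2)
      = (auxPoly Y).eval w / w := by
    simp only [auxPoly, eval_add, eval_mul, eval_pow, eval_C, eval_X]
    field_simp; ring
  have hdeg : ((auxPoly Y)^ℓ).natDegree < 2*ℓ+1 := by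
    have h0 := Polynomial.natDegree_pow_le (p := auxPoly Y) (n := ℓ)
    have h2 := auxPoly_natDegree Y
    calc ((auxPoly Y)^ℓ).natDegree ≤ ℓ * (auxPoly Y).natDegree := h0
    _ ≤ ℓ * 2 := Nat.mul_le_mul_left _ h2
    _ < 2*ℓ+1 := by omega
  rw [h1, div_pow, ← Polynomial.eval_pow, Polynomial.eval_eq_sum_range' hdeg, Finset.sum_div]
  refine Finset.sum_congr rfl fun m hm => ?_
  rw [zpow_sub₀ hw, zpow_natCast, zpow_natCast, mul_div_assoc]

lemma aux_dotC_Nvec (Y : Fin 3 → ℂ) (θ : ℝ) :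
    dotC Y (Nvec θ) = Y 0 + Complex.exp (θ * Complex.I) * ((Y 1 + Complex.I * Y 2)/2)
      + (Complex.exp (θ * Complex.I))⁻¹ * ((-Y 1 + Complex.I * Y 2)/2) := by
  have h2 : (Complex.exp ((θ:ℂ) * Complex.I))⁻¹ = Complex.exp ((-θ:ℝ) * Complex.I) := by
    rw [← Complex.exp_neg]; push_cast; ring_nf
  rw [h2, Complex.exp_mul_I, Complex.exp_mul_I]
  unfold dotC Nvec
  rw [Fin.sum_univ_three]
  push_cast
  simp only [Matrix.cons_val_zero, Matrix.cons_val_one, Matrix.head_cons, Complex.cos_neg,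
    Complex.sin_neg, Matrix.cons_val_two, Matrix.tail_cons]
  ring

lemma aux_dotC_mulVec (Q : Matrix (Fin 3) (Fin 3) ℂ) (Y Z : Fin 3 → ℂ) :
    dotC (Q.mulVec Y) Z = dotC Y (Qᵀ.mulVec Z) := by
  simp only [dotC, Matrix.mulVec, dotProduct, Fin.sum_univ_three, Matrix.transpose_apply]
  ring

lemma aux_dotC_null (g : Matrix.specialOrthogonalGroup (Fin 3) ℝ) (θ : ℝ) :
    letI M := (((g : Matrix (Fin 3) (Fin 3) ℝ).map Complex.ofReal)ᵀ).mulVec (Nvec θ)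
    M 0 ^ 2 + M 1 ^ 2 + M 2 ^ 2 = 0 := by
  set M := (((g : Matrix (Fin 3) (Fin 3) ℝ).map Complex.ofReal)ᵀ).mulVec (Nvec θ) with hMdef
  have hg : (g : Matrix (Fin 3) (Fin 3) ℝ) * (g : Matrix (Fin 3) (Fin 3) ℝ)ᵀ = 1 := by
    have h : (g : Matrix (Fin 3) (Fin 3) ℝ) ∈ Matrix.unitaryGroup (Fin 3) ℝ := g.2.1
    rw [Matrix.mem_unitaryGroup_iff] at h
    simpa [Matrix.star_eq_conjTranspose, Matrix.conjTranspose_eq_transpose_of_trivial] using h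
  have hgC : ((g : Matrix (Fin 3) (Fin 3) ℝ).map Complex.ofReal) *
      ((g : Matrix (Fin 3) (Fin 3) ℝ).map Complex.ofReal)ᵀ = 1 := by
    have h1 : (((g : Matrix (Fin 3) (Fin 3) ℝ) * (g : Matrix (Fin 3) (Fin 3) ℝ)ᵀ).map
        (Complex.ofRealHom : ℝ →+* ℂ) : Matrix (Fin 3) (Fin 3) ℂ) = 1 := by
      rw [hg]; simp
    rw [Matrix.map_mul] at h1
    have h2 : ((g : Matrix (Fin 3) (Fin 3) ℝ)ᵀ).map (Complex.ofRealHom : ℝ →+* ℂ)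
        = (((g : Matrix (Fin 3) (Fin 3) ℝ)).map (Complex.ofRealHom : ℝ →+* ℂ))ᵀ :=
      Matrix.transpose_map
    rw [h2] at h1
    exact h1
  have key : dotC M M = dotC (Nvec θ) (Nvec θ) := by
    show dotC ((((g : Matrix (Fin 3) (Fin 3) ℝ).map Complex.ofReal)ᵀ).mulVec (Nvec θ)) _ = _
    rw [aux_dotC_mulVec, Matrix.transpose_transpose, Matrix.mulVec_mulVec, hgC,
      Matrix.one_mulVec]
  have hnn : dotC (Nvec θ) (Nvec θ) = 0 := by
    simp only [dotC, Nvec, Fin.sum_univ_three, Matrix.cons_val_zero, Matrix.cons_val_one,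
      Matrix.head_cons, Matrix.cons_val_two, Matrix.tail_cons]
    have h := Real.sin_sq_add_cos_sq θ
    have hc : (Real.sin θ : ℂ)^2 + (Real.cos θ : ℂ)^2 = 1 := by
      exact_mod_cast congrArg Complex.ofReal h
    linear_combination ((Real.sin θ:ℂ)^2 + (Real.cos θ:ℂ)^2) * Complex.I_sq - hc
  have hMM : dotC M M = M 0 ^2 + M 1^2 + M 2^2 := by
    simp only [dotC, Fin.sum_univ_three]; ring
  rw [← hMM, key, hnn]

lemma aux_A_ne_zero (M : Fin 3 → ℂ) (hnull : M 0 ^ 2 + M 1 ^ 2 + M 2 ^ 2 = 0)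
    (hB : M 0 ≠ 0) : M 1 - Complex.I * M 2 ≠ 0 := by
  intro hA
  apply hB
  have h : M 0 ^ 2 = -((M 1 - Complex.I * M 2) * (M 1 + Complex.I * M 2)) := by
    linear_combination hnull - (M 2)^2 * Complex.I_sq
  rw [hA] at h
  simpa [pow_eq_zero_iff] using h

lemma aux_M_decomp (M : Fin 3 → ℂ) (Y : Fin 3 → ℂ)
    (hnull : M 0 ^ 2 + M 1 ^ 2 + M 2 ^ 2 = 0) (hB : M 0 ≠ 0) :
    dotC Y M = M 0 * (Y 0 + (M 1 - Complex.I * M 2) / M 0 * ((Y 1 + Complex.I * Y 2)/2)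
      + ((M 1 - Complex.I * M 2) / M 0)⁻¹ * ((-Y 1 + Complex.I * Y 2)/2)) := by
  have hA : M 1 - Complex.I * M 2 ≠ 0 := aux_A_ne_zero M hnull hB
  have hBB : M 0 ^ 2 = -((M 1 - Complex.I * M 2) * (M 1 + Complex.I * M 2)) := by
    linear_combination hnull - (M 2)^2 * Complex.I_sq
  have h1 : M 0 * ((M 1 - Complex.I * M 2) / M 0) = M 1 - Complex.I * M 2 := by
    field_simp
  have h2 : M 0 * ((M 1 - Complex.I * M 2) / M 0)⁻¹ = -(M 1 + Complex.I * M 2) := by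
    rw [inv_div, mul_div_assoc', div_eq_iff hA]
    linear_combination hBB
  calc dotC Y M = Y 0 * M 0 + Y 1 * M 1 + Y 2 * M 2 := by
        simp [dotC, Fin.sum_univ_three]
    _ = M 0 * Y 0 + (M 0 * ((M 1 - Complex.I * M 2) / M 0)) * ((Y 1 + Complex.I * Y 2)/2)
        + (M 0 * ((M 1 - Complex.I * M 2) / M 0)⁻¹) * ((-Y 1 + Complex.I * Y 2)/2) := by
      rw [h1, h2]
      linear_combination (Y 2 * M 2) * Complex.I_sq
    _ = M 0 * (Y 0 + (M 1 - Complex.I * M 2) / M 0 * ((Y 1 + Complex.I * Y 2)/2)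
        + ((M 1 - Complex.I * M 2) / M 0)⁻¹ * ((-Y 1 + Complex.I * Y 2)/2)) := by
      ring

lemma aux_key (ℓ : ℕ) (A B : ℂ) (hA : A ≠ 0) (hB : B ≠ 0) (c : ℕ → ℂ) :
    ∑ k ∈ Finset.Icc (-(ℓ:ℤ)) ℓ,
      ((1/(2*(ℓ:ℂ)+1)) * ∑ n ∈ Finset.Icc (-(ℓ:ℤ)) ℓ,
          Complex.exp (2*π*Complex.I/(2*ℓ+1)) ^ (-(k*n)) * A ^ n * B ^ ((ℓ:ℤ) - n)) *
        (∑ m ∈ Finset.range (2*ℓ+1), c m *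
          (Complex.exp (2*π*Complex.I/(2*ℓ+1)) ^ k) ^ ((m:ℤ) - ℓ))
      = B ^ ℓ * ∑ m ∈ Finset.range (2*ℓ+1), c m * (A / B) ^ ((m:ℤ) - (ℓ:ℤ)) := by
  set ρ := Complex.exp (2*π*Complex.I/(2*(ℓ:ℂ)+1)) with hρdef
  have hρ : ρ ≠ 0 := Complex.exp_ne_zero _
  have hLnat : ((2*ℓ+1 : ℕ) : ℂ) ≠ 0 := Nat.cast_ne_zero.mpr (by omega)
  have hL' : (2*(ℓ:ℂ)+1) = ((2*ℓ+1 : ℕ) : ℂ) := by push_cast; ring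
  calc
    ∑ k ∈ Finset.Icc (-(ℓ:ℤ)) ℓ,
      ((1/(2*(ℓ:ℂ)+1)) * ∑ n ∈ Finset.Icc (-(ℓ:ℤ)) ℓ,
          ρ ^ (-(k*n)) * A ^ n * B ^ ((ℓ:ℤ) - n)) *
        (∑ m ∈ Finset.range (2*ℓ+1), c m * (ρ ^ k) ^ ((m:ℤ) - ℓ))
      = ∑ k ∈ Finset.Icc (-(ℓ:ℤ)) ℓ, ∑ n' ∈ Finset.range (2*ℓ+1), ∑ m ∈ Finset.range (2*ℓ+1),
          (1/((2*ℓ+1:ℕ):ℂ)) *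
            ((ρ ^ (-(k*((n':ℤ)-ℓ))) * A ^ ((n':ℤ)-ℓ) * B ^ ((ℓ:ℤ)-((n':ℤ)-ℓ))) *
              (c m * (ρ ^ k) ^ ((m:ℤ) - ℓ))) := by
        refine Finset.sum_congr rfl fun k _ => ?_
        rw [aux_sum_Icc' ℓ (fun n => ρ ^ (-(k*n)) * A ^ n * B ^ ((ℓ:ℤ) - n)), hL',
          mul_assoc, Finset.sum_mul_sum]
        simp only [Finset.mul_sum]
    _ = ∑ n' ∈ Finset.range (2*ℓ+1), ∑ m ∈ Finset.range (2*ℓ+1), ∑ k ∈ Finset.Icc (-(ℓ:ℤ)) ℓ,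
          (1/((2*ℓ+1:ℕ):ℂ)) *
            ((ρ ^ (-(k*((n':ℤ)-ℓ))) * A ^ ((n':ℤ)-ℓ) * B ^ ((ℓ:ℤ)-((n':ℤ)-ℓ))) *
              (c m * (ρ ^ k) ^ ((m:ℤ) - ℓ))) := by
        rw [Finset.sum_comm]
        exact Finset.sum_congr rfl fun n' _ => Finset.sum_comm
    _ = ∑ n' ∈ Finset.range (2*ℓ+1), ∑ m ∈ Finset.range (2*ℓ+1),
          ((1/((2*ℓ+1:ℕ):ℂ)) * A ^ ((n':ℤ)-ℓ) * B ^ ((ℓ:ℤ)-((n':ℤ)-ℓ)) * c m) *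
            (if n' = m then ((2*ℓ+1 : ℕ) : ℂ) else 0) := by
        refine Finset.sum_congr rfl fun n' hn' => Finset.sum_congr rfl fun m hm => ?_
        rw [← aux_dft ℓ n' m (Finset.mem_range.mp hn') (Finset.mem_range.mp hm), Finset.mul_sum]
        refine Finset.sum_congr rfl fun k _ => ?_
        calc (1/((2*ℓ+1:ℕ):ℂ)) *
            ((ρ ^ (-(k*((n':ℤ)-ℓ))) * A ^ ((n':ℤ)-ℓ) * B ^ ((ℓ:ℤ)-((n':ℤ)-ℓ))) *
              (c m * (ρ ^ k) ^ ((m:ℤ) - ℓ)))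
            = ((1/((2*ℓ+1:ℕ):ℂ)) * A ^ ((n':ℤ)-ℓ) * B ^ ((ℓ:ℤ)-((n':ℤ)-ℓ)) * c m) *
              (ρ ^ (-(k*((n':ℤ)-ℓ))) * ρ ^ (k*((m:ℤ)-ℓ))) := by
                rw [← _root_.zpow_mul]; ring
          _ = ((1/((2*ℓ+1:ℕ):ℂ)) * A ^ ((n':ℤ)-ℓ) * B ^ ((ℓ:ℤ)-((n':ℤ)-ℓ)) * c m) *
              ρ ^ (k * ((m:ℤ) - n')) := by
                rw [← zpow_add₀ hρ]
                congr 1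
                ring
    _ = ∑ n' ∈ Finset.range (2*ℓ+1),
          ((1/((2*ℓ+1:ℕ):ℂ)) * A ^ ((n':ℤ)-ℓ) * B ^ ((ℓ:ℤ)-((n':ℤ)-ℓ)) * c n') *
            ((2*ℓ+1 : ℕ) : ℂ) := by
        refine Finset.sum_congr rfl fun n' hn' => ?_
        simp only [mul_ite, mul_zero]
        rw [Finset.sum_ite_eq]
        simp only [hn', if_pos]
    _ = B ^ ℓ * ∑ m ∈ Finset.range (2*ℓ+1), c m * (A / B) ^ ((m:ℤ) - (ℓ:ℤ)) := by
        rw [Finset.mul_sum]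
        refine Finset.sum_congr rfl fun m _ => ?_
        rw [div_zpow, zpow_sub₀ hB, zpow_natCast]
        calc (1/((2*ℓ+1:ℕ):ℂ)) * A ^ ((m:ℤ)-ℓ) * (B^ℓ/B^((m:ℤ)-ℓ)) * c m * ((2*ℓ+1:ℕ):ℂ)
            = (((2*ℓ+1:ℕ):ℂ) * (1/((2*ℓ+1:ℕ):ℂ))) *
              (A ^ ((m:ℤ)-ℓ) * (B^ℓ/B^((m:ℤ)-ℓ)) * c m) := by ring
          _ = A ^ ((m:ℤ)-ℓ) * (B^ℓ/B^((m:ℤ)-ℓ)) * c m := by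
              rw [mul_one_div_cancel hLnat, one_mul]
          _ = B ^ ℓ * (c m * (A^((m:ℤ)-ℓ)/B^((m:ℤ)-ℓ))) := by ring


theorem group_action_Phi (ℓ : ℕ) (hℓ : 1 ≤ ℓ)
    (g : Matrix.specialOrthogonalGroup (Fin 3) ℝ)
    (j : ℤ) (hj : j ∈ Finset.Icc (-(ℓ : ℤ)) ℓ)
    (hβ : dotC (((g : Matrix (Fin 3) (Fin 3) ℝ).map Complex.ofReal).mulVec ![1, 0, 0])
            (Nvec ((j : ℝ) * (2 * π / (2 * ℓ + 1)))) ≠ 0)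
    (X : Fin 3 → ℝ) :
    (dotC (fun i => (((g : Matrix (Fin 3) (Fin 3) ℝ).mulVec X) i : ℂ))
        (Nvec ((j : ℝ) * (2 * π / (2 * ℓ + 1))))) ^ ℓ
      = ∑ k ∈ Finset.Icc (-(ℓ : ℤ)) ℓ,
          ((1 / (2 * ℓ + 1) : ℂ) *
              ∑ n ∈ Finset.Icc (-(ℓ : ℤ)) ℓ,
                Complex.exp (2 * π * Complex.I / (2 * ℓ + 1)) ^ (-(k * n)) *
                  (dotC (((g : Matrix (Fin 3) (Fin 3) ℝ).map Complex.ofReal).mulVec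
                      ![0, 1, -Complex.I]) (Nvec ((j : ℝ) * (2 * π / (2 * ℓ + 1))))) ^ n *
                  (dotC (((g : Matrix (Fin 3) (Fin 3) ℝ).map Complex.ofReal).mulVec
                      ![1, 0, 0]) (Nvec ((j : ℝ) * (2 * π / (2 * ℓ + 1))))) ^ ((ℓ : ℤ) - n)) *
            (dotC (fun i => (X i : ℂ)) (Nvec ((k : ℝ) * (2 * π / (2 * ℓ + 1))))) ^ ℓ := by
  have hρ : Complex.exp (2*π*Complex.I/(2*(ℓ:ℂ)+1)) ≠ 0 := Complex.exp_ne_zero _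
  set ρ : ℂ := Complex.exp (2*π*Complex.I/(2*(ℓ:ℂ)+1)) with hρdef
  set θ : ℝ := (j : ℝ) * (2 * π / (2 * ℓ + 1)) with hθdef
  set gC : Matrix (Fin 3) (Fin 3) ℂ := (g : Matrix (Fin 3) (Fin 3) ℝ).map Complex.ofReal
    with hgCdef
  set M : Fin 3 → ℂ := (gC)ᵀ.mulVec (Nvec θ) with hMdef
  set Xc : Fin 3 → ℂ := fun i => (X i : ℂ) with hXcdef
  have hnull : M 0 ^ 2 + M 1 ^ 2 + M 2 ^ 2 = 0 := aux_dotC_null g θ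
  have hBeq : dotC (gC.mulVec ![1, 0, 0]) (Nvec θ) = M 0 := by
    rw [aux_dotC_mulVec]
    show dotC ![1,0,0] M = M 0
    simp [dotC, Fin.sum_univ_three]
  have hAeq : dotC (gC.mulVec ![0, 1, -Complex.I]) (Nvec θ) = M 1 - Complex.I * M 2 := by
    rw [aux_dotC_mulVec]
    show dotC ![0,1,-Complex.I] M = M 1 - Complex.I * M 2
    simp [dotC, Fin.sum_univ_three]
    ring
  have hB : M 0 ≠ 0 := by rw [← hBeq]; exact hβ
  have hA : M 1 - Complex.I * M 2 ≠ 0 := aux_A_ne_zero M hnull hB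
  have hw : (M 1 - Complex.I * M 2) / M 0 ≠ 0 := div_ne_zero hA hB
  -- the coefficients
  set c : ℕ → ℂ := fun m => ((auxPoly Xc)^ℓ).coeff m with hcdef
  -- the basis functions
  have hΦ : ∀ k : ℤ, (dotC Xc (Nvec ((k : ℝ) * (2 * π / (2 * ℓ + 1))))) ^ ℓ
      = ∑ m ∈ Finset.range (2*ℓ+1), c m * (ρ ^ k) ^ ((m:ℤ) - ℓ) := by
    intro k
    have he : (((k : ℝ) * (2 * π / (2 * (ℓ:ℝ) + 1)) : ℝ) : ℂ) * Complex.I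
        = (k : ℂ) * (2*π*Complex.I/(2*(ℓ:ℂ)+1)) := by push_cast; ring
    rw [aux_dotC_Nvec, he, Complex.exp_int_mul]
    exact aux_laurent ℓ Xc (ρ ^ k) (zpow_ne_zero _ hρ)
  -- the left-hand side
  have hXvec : (fun i => (((g : Matrix (Fin 3) (Fin 3) ℝ).mulVec X) i : ℂ)) = gC.mulVec Xc := by
    funext i
    simp only [hgCdef, hXcdef, Matrix.mulVec, dotProduct, Fin.sum_univ_three,
      Matrix.map_apply]
    push_cast
    ring
  have hLHS : dotC (fun i => (((g : Matrix (Fin 3) (Fin 3) ℝ).mulVec X) i : ℂ)) (Nvec θ)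
      = dotC Xc M := by
    rw [hXvec, aux_dotC_mulVec]
  rw [hLHS, aux_M_decomp M Xc hnull hB, mul_pow,
    aux_laurent ℓ Xc ((M 1 - Complex.I * M 2) / M 0) hw,
    ← aux_key ℓ (M 1 - Complex.I * M 2) (M 0) hA hB c]
  refine Finset.sum_congr rfl fun k hk => ?_
  rw [hΦ k, hAeq, hBeq]

end Aux
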